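/- Abstract form of Theorem 2 (quadratic speedup in learning time): Let H be a finite type (the set of rewarded histories), let p : H → ℝ be nonnegative with ∑_{h} p h = 1, let J : H → ℕ, let t : H → ℕ → ℝ be nonnegative (t h j is the classical expected duration of the j-th interval), let α ≥ 0 be real, and let T_q : H → ℝ satisfy T_q h ≤ α · ∑_{j < J h} √(t h j) for every h. Define T_c h = ∑_{j < J h} t h j. Then the average quantum learning time obeys ∑_{h} p h · T_q h ≤ α · √((∑_{h} p h · (J h)) · (∑_{h} p h · T_c h)); i.e., ⟨T⟩_q ≤ α·√(⟨J⟩·⟨T⟩_c). -/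

import Mathlib

open Real Finset

/-- Abstract form of Theorem 2 (quadratic speedup in learning time):
if the hybrid agent's expected learning time for each rewarded history `h`
satisfies `T_q h ≤ α·∑_{j<J h} √(t h j)` and the classical learning time is
`T_c h = ∑_{j<J h} t h j`, then `⟨T⟩_q ≤ α·√(⟨J⟩·⟨T⟩_c)`. -/
theorem hybrid_quadratic_speedup (H : Type*) [Fintype H]
    (p : H → ℝ) (hp : ∀ h, 0 ≤ p h) (hpsum : ∑ h : H, p h = 1)
    (J : H → ℕ) (t : H → ℕ → ℝ) (ht : ∀ h j, 0 ≤ t h j)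
    (α : ℝ) (hα : 0 ≤ α)
    (Tq : H → ℝ)
    (hTq : ∀ h, Tq h ≤ α * ∑ j ∈ Finset.range (J h), Real.sqrt (t h j))
    (Tc : H → ℝ) (hTc : ∀ h, Tc h = ∑ j ∈ Finset.range (J h), t h j) :
    ∑ h : H, p h * Tq h ≤
      α * Real.sqrt ((∑ h : H, p h * (J h : ℝ)) * (∑ h : H, p h * Tc h)) := by
  have step1 : ∀ h, ∑ j ∈ Finset.range (J h), Real.sqrt (t h j)
      ≤ Real.sqrt (J h) * Real.sqrt (Tc h) := by
    intro h
    have := Real.sum_sqrt_mul_sqrt_le (Finset.range (J h)) (f := fun _ => (1:ℝ))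
      (g := fun j => t h j) (fun _ => zero_le_one) (fun j => ht h j)
    simpa [hTc h] using this
  have step2 : ∑ h : H, p h * Tq h ≤
      α * ∑ h : H, Real.sqrt (p h * J h) * Real.sqrt (p h * Tc h) := by
    rw [Finset.mul_sum]
    apply Finset.sum_le_sum
    intro h _
    calc p h * Tq h ≤ p h * (α * ∑ j ∈ Finset.range (J h), Real.sqrt (t h j)) :=
          mul_le_mul_of_nonneg_left (hTq h) (hp h)
      _ ≤ p h * (α * (Real.sqrt (J h) * Real.sqrt (Tc h))) := by
          exact mul_le_mul_of_nonneg_left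
            (mul_le_mul_of_nonneg_left (step1 h) hα) (hp h)
      _ = α * (Real.sqrt (p h * J h) * Real.sqrt (p h * Tc h)) := by
          rw [Real.sqrt_mul (hp h), Real.sqrt_mul (hp h)]
          linear_combination (-(α * Real.sqrt (J h) * Real.sqrt (Tc h))) *
            Real.mul_self_sqrt (hp h)
  refine step2.trans ?_
  have hcs := Real.sum_sqrt_mul_sqrt_le (Finset.univ : Finset H)
    (f := fun h => p h * J h) (g := fun h => p h * Tc h)
    (fun h => mul_nonneg (hp h) (Nat.cast_nonneg _))
    (fun h => mul_nonneg (hp h) (by rw [hTc h]; exact Finset.sum_nonneg fun j _ => ht h j))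
  have := mul_le_mul_of_nonneg_left hcs hα
  refine this.trans_eq ?_
  rw [← Real.sqrt_mul (Finset.sum_nonneg fun h _ => mul_nonneg (hp h) (Nat.cast_nonneg _))]
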